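/- Let (W, S) be a Coxeter system, J' ⊆ S, and w ∈ {}^{J'}W. Define inductively J_0 = J, J'_0 = J', u_0 = min(W_{J'} w W_{J_0}), and for n ≥ 1: ε(J_n) = ε(J_{n−1}) ∩ Ad(u_0⋯u_{n−1})J_{n−1}, J'_n = J_{n−1} ∩ Ad(u_0⋯u_{n−1})⁻¹ε(J_{n−1}), and u_n determined by u_0⋯u_n = min(W_{J'} w W_{J_n}). Then for every n ≥ 1, u_n ∈ W_{J_{n−1}}. -/

import Mathlib

namespace Lusztig

variable {B : Type*} {W : Type*} [Group W] {M : CoxeterMatrix B}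

/-- The standard parabolic subgroup `W_K` generated by the simple reflections in `K`. -/
def WP (cs : CoxeterSystem M W) (K : Set B) : Subgroup W :=
  Subgroup.closure (cs.simple '' K)

/-- `w` is the unique minimal length element of its left coset `W_K w`
(i.e. `w ∈ ᴷW`). -/
def IsMinL (cs : CoxeterSystem M W) (K : Set B) (w : W) : Prop :=
  ∀ a ∈ WP cs K, a * w ≠ w → cs.length w < cs.length (a * w)

/-- `w` is the unique minimal length element of its right coset `w W_K`
(i.e. `w ∈ Wᴷ`). -/
def IsMinR (cs : CoxeterSystem M W) (K : Set B) (w : W) : Prop :=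
  ∀ b ∈ WP cs K, w * b ≠ w → cs.length w < cs.length (w * b)

/-- `x` is the unique minimal length element of its double coset `W_K x W_{K'}`
(i.e. `x ∈ ᴷWᴷ'`). -/
def IsMinDC (cs : CoxeterSystem M W) (K K' : Set B) (x : W) : Prop :=
  ∀ a ∈ WP cs K, ∀ b ∈ WP cs K', a * x * b ≠ x → cs.length x < cs.length (a * x * b)

/-- `x` is the unique minimal length element of the double coset `W_K g W_{K'}`. -/
def IsMinOf (cs : CoxeterSystem M W) (K K' : Set B) (g x : W) : Prop :=
  (∃ a ∈ WP cs K, ∃ b ∈ WP cs K', x = a * g * b) ∧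
  ∀ a ∈ WP cs K, ∀ b ∈ WP cs K', a * g * b ≠ x → cs.length x < cs.length (a * g * b)

/-- `Ad(x)J ∩ S`, as a set of indices of simple reflections:
the set of `s` with `simple s = x * (simple t) * x⁻¹` for some `t ∈ J`. -/
def AdSet (cs : CoxeterSystem M W) (x : W) (J : Set B) : Set B :=
  {s | ∃ t ∈ J, cs.simple s = x * cs.simple t * x⁻¹}

/-- The product `u 0 * u 1 * ⋯ * u (n-1)`. -/
def pr (u : ℕ → W) (n : ℕ) : W := ((List.range n).map u).prod

/-- Lusztig's set `S(J, ε)` (2.3): sequences `(J_n, J'_n, u_n)` with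
`J = J_0 ⊇ J_1 ⊇ ⋯`, `ε(J_n) = ε(J_{n-1}) ∩ Ad(u_0⋯u_{n-1})J_{n-1}` (n ≥ 1),
`J'_0 = ε(J) = J'`, `J'_n = J_{n-1} ∩ Ad(u_0⋯u_{n-1})⁻¹ε(J_{n-1})` (n ≥ 1),
`u_n ∈ W_{J_{n-1}}` (n ≥ 1), `u_n ∈ {}^{J'_n}W ∩ W^{J_n}` (n ≥ 0).
Here `ε` is encoded by its restriction `f : B ≃ B` to the simple reflections. -/
structure SSeq (cs : CoxeterSystem M W) (f : B ≃ B) (J : Set B) where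
  Jn : ℕ → Set B
  J'n : ℕ → Set B
  u : ℕ → W
  hJ0 : Jn 0 = J
  hJ'0 : J'n 0 = f '' J
  hmono : ∀ n, Jn (n + 1) ⊆ Jn n
  hb : ∀ n, f '' Jn (n + 1) = (f '' Jn n) ∩ AdSet cs (pr u (n + 1)) (Jn n)
  hc : ∀ n, J'n (n + 1) = Jn n ∩ AdSet cs (pr u (n + 1))⁻¹ (f '' Jn n)
  hd : ∀ n, u (n + 1) ∈ WP cs (Jn n)
  he : ∀ n, IsMinL cs (J'n n) (u n) ∧ IsMinR cs (Jn n) (u n)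

/-- Lusztig's set `T(J, ε)` (2.2): sequences `(J_n, w_n)` with
`J = J_0 ⊇ J_1 ⊇ ⋯`, `J_n = J_{n-1} ∩ ε⁻¹(Ad(w_{n-1})J_{n-1})` (n ≥ 1),
`w_n ∈ {}^{ε(J_n)}W^{J_n}` (n ≥ 0), `w_n ∈ W_{ε(J_n)} w_{n-1} W_{J_{n-1}}` (n ≥ 1). -/
structure TSeq (cs : CoxeterSystem M W) (f : B ≃ B) (J : Set B) where
  Jn : ℕ → Set B
  w : ℕ → W
  hJ0 : Jn 0 = J
  hmono : ∀ n, Jn (n + 1) ⊆ Jn n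
  hb : ∀ n, Jn (n + 1) = Jn n ∩ f.symm '' AdSet cs (w n) (Jn n)
  hc : ∀ n, IsMinDC cs (f '' Jn n) (Jn n) (w n)
  hd : ∀ n, ∃ a ∈ WP cs (f '' Jn (n + 1)), ∃ b ∈ WP cs (Jn n), w (n + 1) = a * w n * b

open List CoxeterSystem

section Aux

variable (cs : CoxeterSystem M W)

open Classical in
/-- mod-2 count of `t` in a list of group elements. -/
noncomputable def cnt (t : W) (L : List W) : ZMod 2 :=
  (L.map (fun x => if x = t then (1 : ZMod 2) else 0)).sum

@[simp] lemma cnt_nil (t : W) : cnt t ([] : List W) = 0 := rfl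

open Classical in
lemma cnt_cons (t h : W) (L : List W) :
    cnt t (h :: L) = (if h = t then 1 else 0) + cnt t L := by
  simp [cnt]

lemma cnt_append (t : W) (L L' : List W) :
    cnt t (L ++ L') = cnt t L + cnt t L' := by
  simp [cnt]

lemma mem_of_cnt_ne_zero {t : W} {L : List W} (h : cnt t L ≠ 0) : t ∈ L := by
  induction L with
  | nil => simp [cnt] at h
  | cons a L ih =>
    rw [cnt_cons] at h
    by_cases hat : a = t
    · exact hat ▸ (mem_cons_self : a ∈ a :: L)
    · rw [if_neg hat, zero_add] at h
      exact mem_cons_of_mem a (ih h)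

open Classical in
/-- Tits' reflection/sign involution attached to a simple reflection. -/
noncomputable def etaFun (i : B) : W × ZMod 2 → W × ZMod 2 :=
  fun p => (cs.simple i * p.1 * cs.simple i, p.2 + if p.1 = cs.simple i then 1 else 0)

lemma etaFun_involutive (i : B) : Function.Involutive (etaFun cs i) := by
  rintro ⟨t, e⟩
  have h1 : cs.simple i * (cs.simple i * t * cs.simple i) * cs.simple i = t := by
    rw [← mul_assoc, ← mul_assoc, cs.simple_mul_simple_self, one_mul,
      mul_assoc, cs.simple_mul_simple_self, mul_one]
  have h2 : (cs.simple i * t * cs.simple i = cs.simple i) ↔ (t = cs.simple i) := by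
    constructor
    · intro h
      have h3 : t = cs.simple i * (cs.simple i * t * cs.simple i) * cs.simple i := h1.symm
      rw [h, cs.simple_mul_simple_self, one_mul] at h3
      exact h3
    · rintro rfl
      rw [cs.simple_mul_simple_self, one_mul]
  classical
  simp only [etaFun]
  refine Prod.ext h1 ?_
  simp only
  simp only [h2]
  by_cases h : t = cs.simple i
  · have h4 : (1 : ZMod 2) + 1 = 0 := by decide
    simp [h, add_assoc, h4]
  · simp [h]

/-- Tits' permutation attached to a simple reflection. -/
noncomputable def eta (i : B) : Equiv.Perm (W × ZMod 2) :=
  Function.Involutive.toPerm _ (etaFun_involutive cs i)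

lemma eta_apply (i : B) (p : W × ZMod 2) : eta cs i p = etaFun cs i p := rfl

lemma rightInvSeq_cons (i : B) (ω : List B) :
    cs.rightInvSeq (i :: ω) =
      ((cs.wordProd ω)⁻¹ * cs.simple i * cs.wordProd ω) :: cs.rightInvSeq ω := rfl

/-- Master formula: the product of the `eta`'s along a word acts by conjugation in the
first coordinate and adds the mod-2 count of the right inversion sequence. -/
lemma prodEta_apply (ω : List B) (t : W) (e : ZMod 2) :
    ((ω.map (eta cs)).prod) (t, e)
      = (cs.wordProd ω * t * (cs.wordProd ω)⁻¹, e + cnt t (cs.rightInvSeq ω)) := by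
  induction ω with
  | nil => simp [cs.wordProd_nil]
  | cons i ω ih =>
    rw [map_cons, prod_cons, Equiv.Perm.mul_apply, ih, eta_apply, etaFun]
    simp only [cs.wordProd_cons, rightInvSeq_cons, cnt_cons]
    refine Prod.ext ?_ ?_
    · simp only [mul_inv_rev, cs.inv_simple]
      group
    · simp only
      have hiff : (cs.wordProd ω * t * (cs.wordProd ω)⁻¹ = cs.simple i)
          ↔ ((cs.wordProd ω)⁻¹ * cs.simple i * cs.wordProd ω = t) := by
        constructor <;> intro h <;>
        · rw [← h]; group
      by_cases h : cs.wordProd ω * t * (cs.wordProd ω)⁻¹ = cs.simple i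
      · rw [if_pos h, if_pos (hiff.mp h)]; ring
      · rw [if_neg h, if_neg (fun hh => h (hiff.mpr hh))]; ring

lemma conj_alt (i i' : B) (a : ℕ) :
    cs.simple i' * cs.wordProd (alternatingWord i' i (2 * a + 1)) * cs.simple i'
      = cs.wordProd (alternatingWord i i' (2 * a + 3)) := by
  have hodd1 : ¬ Even (2 * a + 1) := by rw [Nat.even_iff]; omega
  have hodd2 : ¬ Even (2 * a + 3) := by rw [Nat.even_iff]; omega
  rw [cs.prod_alternatingWord_eq_mul_pow, cs.prod_alternatingWord_eq_mul_pow,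
    if_neg hodd1, if_neg hodd2]
  have hd1 : (2 * a + 1) / 2 = a := by omega
  have hd2 : (2 * a + 3) / 2 = a + 1 := by omega
  rw [hd1, hd2]
  have hsc : SemiconjBy (cs.simple i) (cs.simple i' * cs.simple i)
      (cs.simple i * cs.simple i') := by
    unfold SemiconjBy
    rw [mul_assoc]
  have hsc' := (hsc.pow_right a).eq
  -- s i * (s i' * s i) ^ a = (s i * s i') ^ a * s i
  rw [pow_succ, hsc']
  group

lemma ris_alternatingWord (m : ℕ) (i i' : B) :
    cs.rightInvSeq (alternatingWord i i' m)
      = (List.range m).map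
          (fun k => cs.wordProd (alternatingWord i i' (2 * (m - k) - 1))) := by
  induction m generalizing i i' with
  | zero => simp [alternatingWord]
  | succ m ih =>
    rw [alternatingWord_succ, cs.rightInvSeq_concat, ih i' i]
    rw [List.range_succ, List.map_append, List.map_map, List.concat_eq_append]
    congr 1
    · apply List.map_congr_left
      intro k hk
      have hk' : k < m := List.mem_range.mp hk
      have ha : 2 * (m - k) - 1 = 2 * (m - k - 1) + 1 := by omega
      have hb : 2 * (m + 1 - k) - 1 = 2 * (m - k - 1) + 3 := by omega
      simp only [Function.comp_apply, ha, hb]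
      rw [← conj_alt cs i i' (m - k - 1)]
      simp [MulAut.conj_apply, cs.inv_simple, mul_assoc]
    · simp only [List.map_cons, List.map_nil]
      have h2 : 2 * (m + 1 - m) - 1 = 1 := by omega
      rw [h2]
      have h1 : alternatingWord i i' 1 = [i'] := rfl
      have h3 : cs.wordProd [i'] = cs.simple i' := by
        rw [cs.wordProd_cons, cs.wordProd_nil, mul_one]
      rw [h1, h3]

lemma alt_period (i i' : B) (q : ℕ) :
    cs.wordProd (alternatingWord i i' (q + 2 * M i i'))
      = cs.wordProd (alternatingWord i i' q) := by
  rw [cs.prod_alternatingWord_eq_mul_pow, cs.prod_alternatingWord_eq_mul_pow]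
  have he : Even (q + 2 * M i i') ↔ Even q := by
    rw [Nat.even_iff, Nat.even_iff]; omega
  have hd : (q + 2 * M i i') / 2 = q / 2 + M i i' := by omega
  rw [hd, pow_add, cs.simple_mul_simple_pow, mul_one]
  congr 1
  simp only [he]

lemma eta_liftable : M.IsLiftable (eta cs) := by
  intro i i'
  set m := M i i' with hm
  have hword : ∀ n : ℕ, ((alternatingWord i i' (2 * n)).map (eta cs)).prod
      = (eta cs i * eta cs i') ^ n := by
    intro n
    induction n with
    | zero => simp [alternatingWord]
    | succ n ihn =>
      have h2 : 2 * (n + 1) = (2 * n + 1) + 1 := by omega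
      have hso : ¬ Even (2 * n + 1) := by rw [Nat.even_iff]; omega
      have hse : Even (2 * n) := by rw [Nat.even_iff]; omega
      rw [h2, alternatingWord_succ', if_neg hso, alternatingWord_succ', if_pos hse]
      rw [List.map_cons, List.map_cons, List.prod_cons, List.prod_cons, ihn]
      rw [pow_succ']
      rw [mul_assoc]
  apply Equiv.ext
  rintro ⟨t, e⟩
  rw [← hword m, prodEta_apply]
  have hπ : cs.wordProd (alternatingWord i i' (2 * m)) = 1 := by
    rw [cs.prod_alternatingWord_eq_mul_pow,
      if_pos (by rw [Nat.even_iff]; omega : Even (2 * m))]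
    have : 2 * m / 2 = m := by omega
    rw [this, one_mul, hm, cs.simple_mul_simple_pow]
  have hcnt : cnt t (cs.rightInvSeq (alternatingWord i i' (2 * m))) = 0 := by
    rw [ris_alternatingWord]
    have h2m : 2 * m = m + m := by omega
    rw [h2m, List.range_add, List.map_append, cnt_append]
    have : (List.map (fun x => m + x) (List.range m)).map
        (fun k => cs.wordProd (alternatingWord i i' (2 * (m + m - k) - 1)))
        = (List.range m).map
          (fun k => cs.wordProd (alternatingWord i i' (2 * (m + m - k) - 1))) := by
      rw [List.map_map]
      apply List.map_congr_left
      intro k hk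
      have hk' : k < m := List.mem_range.mp hk
      simp only [Function.comp_apply]
      have harg : 2 * (m + m - k) - 1 = (2 * (m + m - (m + k)) - 1) + 2 * M i i' := by omega
      rw [harg, alt_period]
    rw [this]
    generalize (List.map (fun k => cs.wordProd (alternatingWord i i' (2 * (m + m - k) - 1)))
      (List.range m)) = L
    have : ∀ x : ZMod 2, x + x = 0 := by decide
    exact this _
  rw [hπ, hcnt, add_zero, one_mul, inv_one, mul_one]
  rfl

/-- The lift of the Tits involutions to `W`. -/
noncomputable def phi : W →* Equiv.Perm (W × ZMod 2) :=
  cs.lift ⟨eta cs, eta_liftable cs⟩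

lemma phi_simple (i : B) : phi cs (cs.simple i) = eta cs i :=
  cs.lift_apply_simple (eta_liftable cs) i

lemma phi_wordProd (ω : List B) : phi cs (cs.wordProd ω) = (ω.map (eta cs)).prod := by
  induction ω with
  | nil => simp [cs.wordProd_nil]
  | cons i ω ih =>
    rw [cs.wordProd_cons, map_mul, ih, List.map_cons, List.prod_cons, phi_simple]

/-- The mod-2 count of `t` in the right inversion sequence only depends on the
element represented by the word. -/
lemma cnt_ris_eq (ω ω' : List B) (h : cs.wordProd ω = cs.wordProd ω') (t : W) :
    cnt t (cs.rightInvSeq ω) = cnt t (cs.rightInvSeq ω') := by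
  have h2 : phi cs (cs.wordProd ω) (t, 0) = phi cs (cs.wordProd ω') (t, 0) := by rw [h]
  rw [phi_wordProd, phi_wordProd, prodEta_apply, prodEta_apply] at h2
  have := congrArg Prod.snd h2
  simpa using this

/-- If the mod-2 count of `s i` in `ris ω` is `1`, then `s i` is a right descent of `π ω`. -/
lemma descent_of_cnt_one (ω : List B) (i : B)
    (h : cnt (cs.simple i) (cs.rightInvSeq ω) = 1) :
    cs.length (cs.wordProd ω * cs.simple i) < cs.length (cs.wordProd ω) := by
  obtain ⟨ρ, hρlen, hρeq⟩ := cs.exists_reduced_word (cs.wordProd ω)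
  have hred : cs.IsReduced ρ := by
    exact hρlen
  have hc : cnt (cs.simple i) (cs.rightInvSeq ρ) = 1 := by
    rw [← cnt_ris_eq cs ω ρ hρeq]
    exact h
  have hmem : cs.simple i ∈ cs.rightInvSeq ρ := by
    apply mem_of_cnt_ne_zero
    rw [hc]
    decide
  have := (cs.isRightInversion_of_mem_rightInvSeq hred hmem).2
  rwa [← hρeq] at this

/-- Dichotomy: if the count is `0`, then `s i` is a right ascent. -/
lemma ascent_of_cnt_zero (ω : List B) (i : B)
    (h : cnt (cs.simple i) (cs.rightInvSeq ω) = 0) :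
    cs.length (cs.wordProd ω) < cs.length (cs.wordProd ω * cs.simple i) := by
  have hconcat : cnt (cs.simple i) (cs.rightInvSeq (ω.concat i)) = 1 := by
    rw [cs.rightInvSeq_concat, List.concat_eq_append, cnt_append]
    have h1 : cnt (cs.simple i)
        (List.map (⇑(MulAut.conj (cs.simple i))) (cs.rightInvSeq ω))
        = cnt (cs.simple i) (cs.rightInvSeq ω) := by
      unfold cnt
      rw [List.map_map]
      congr 1
      apply List.map_congr_left
      intro x _
      simp only [Function.comp_apply, MulAut.conj_apply]
      congr 1
      rw [cs.inv_simple]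
      apply propext
      constructor
      · intro hx
        have h5 : x = (cs.simple i) * cs.simple i * (cs.simple i) := by
          have h6 := congrArg (fun y => cs.simple i * y * cs.simple i) hx
          rw [← h6]
          rw [← mul_assoc, ← mul_assoc, cs.simple_mul_simple_self, one_mul, mul_assoc,
            cs.simple_mul_simple_self, mul_one]
        rw [h5, cs.simple_mul_simple_self, one_mul]
      · rintro rfl
        rw [mul_assoc, cs.simple_mul_simple_self, mul_one]
    rw [h1, h]
    have h2 : cnt (cs.simple i) [cs.simple i] = 1 := by
      rw [cnt]
      simp
    rw [h2, zero_add]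
  have := descent_of_cnt_one cs (ω.concat i) i hconcat
  rwa [cs.wordProd_concat, mul_assoc, cs.simple_mul_simple_self, mul_one] at this

/-- Left exchange property, for arbitrary words. -/
lemma left_exchange {ω : List B} {i : B}
    (h : cs.length (cs.simple i * cs.wordProd ω) < cs.length (cs.wordProd ω)) :
    ∃ j < ω.length, cs.simple i * cs.wordProd ω = cs.wordProd (ω.eraseIdx j) := by
  have hrev : cs.length (cs.wordProd ω.reverse * cs.simple i)
      < cs.length (cs.wordProd ω.reverse) := by
    rw [cs.wordProd_reverse]
    have e1 : (cs.wordProd ω)⁻¹ * cs.simple i = (cs.simple i * cs.wordProd ω)⁻¹ := by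
      rw [mul_inv_rev, cs.inv_simple]
    rw [e1, cs.length_inv, cs.length_inv]
    exact h
  have hcnt1 : cnt (cs.simple i) (cs.rightInvSeq ω.reverse) = 1 := by
    rcases (by decide : ∀ x : ZMod 2, x = 0 ∨ x = 1) (cnt (cs.simple i) (cs.rightInvSeq ω.reverse))
      with h0 | h1
    · exact absurd hrev (by
        have := ascent_of_cnt_zero cs ω.reverse i h0
        omega)
    · exact h1
  have hmem : cs.simple i ∈ cs.rightInvSeq ω.reverse := by
    apply mem_of_cnt_ne_zero
    rw [hcnt1]
    decide
  have hmem' : cs.simple i ∈ cs.leftInvSeq ω := by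
    have := cs.rightInvSeq_reverse ω
    rw [this] at hmem
    exact List.mem_reverse.mp hmem
  obtain ⟨j, hj, hjeq⟩ := List.mem_iff_getElem.mp hmem'
  rw [cs.length_leftInvSeq] at hj
  refine ⟨j, hj, ?_⟩
  have hgetD : (cs.leftInvSeq ω).getD j 1 = cs.simple i := by
    rw [List.getD_eq_getElem?_getD, List.getElem?_eq_getElem (by rwa [cs.length_leftInvSeq])]
    simpa using hjeq
  rw [← hgetD]
  exact cs.getD_leftInvSeq_mul_wordProd ω j

end Aux

section Aux2

variable (cs : CoxeterSystem M W)

lemma wordProd_mem_WP' {K : Set B} {ω : List B} (h : ∀ i ∈ ω, i ∈ K) :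
    cs.wordProd ω ∈ Subgroup.closure (cs.simple '' K) := by
  induction ω with
  | nil =>
    rw [cs.wordProd_nil]
    exact one_mem _
  | cons i ω ih =>
    rw [cs.wordProd_cons]
    exact mul_mem (Subgroup.subset_closure ⟨i, h i (List.mem_cons_self), rfl⟩)
      (ih fun j hj => h j (List.mem_cons_of_mem i hj))

lemma exists_word_of_mem_WP' {K : Set B} {x : W}
    (hx : x ∈ Subgroup.closure (cs.simple '' K)) :
    ∃ ω : List B, (∀ i ∈ ω, i ∈ K) ∧ x = cs.wordProd ω := by
  refine Subgroup.closure_induction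
    (p := fun g _ => ∃ ω : List B, (∀ i ∈ ω, i ∈ K) ∧ g = cs.wordProd ω)
    ?_ ?_ ?_ ?_ hx
  · rintro g ⟨i, hiK, rfl⟩
    refine ⟨[i], by simpa using hiK, ?_⟩
    rw [cs.wordProd_cons, cs.wordProd_nil, mul_one]
  · exact ⟨[], by simp, (cs.wordProd_nil).symm⟩
  · rintro g g' _ _ ⟨ω, hω, rfl⟩ ⟨ω', hω', rfl⟩
    refine ⟨ω ++ ω', ?_, (cs.wordProd_append ω ω').symm⟩
    intro i hi
    rcases List.mem_append.mp hi with h1 | h1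
    · exact hω i h1
    · exact hω' i h1
  · rintro g _ ⟨ω, hω, rfl⟩
    refine ⟨ω.reverse, ?_, (cs.wordProd_reverse ω).symm⟩
    intro i hi
    exact hω i (List.mem_reverse.mp hi)

lemma lemA_aux {J' K : Set B} {d x : W} {δ : List B}
    (hδlen : δ.length = cs.length d) (hδ : d = cs.wordProd δ)
    (hxmin : ∀ a ∈ Subgroup.closure (cs.simple '' J'), cs.length x ≤ cs.length (a * x))
    (hdmin : ∀ a ∈ Subgroup.closure (cs.simple '' J'),
      a * d ≠ d → cs.length d < cs.length (a * d)) :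
    ∀ n : ℕ, ∀ α β : List B, (∀ i ∈ α, i ∈ J') → (∀ i ∈ β, i ∈ K) →
      α.length + β.length ≤ n → x = cs.wordProd α * d * cs.wordProd β →
      d⁻¹ * x ∈ Subgroup.closure (cs.simple '' K) := by
  intro n
  induction n with
  | zero =>
    intro α β hα hβ hlen hx
    have hα0 : α = [] := List.length_eq_zero_iff.mp (by omega)
    subst hα0
    rw [hx, cs.wordProd_nil, one_mul, inv_mul_cancel_left]
    exact wordProd_mem_WP' cs hβ
  | succ n ih =>
    intro α β hα hβ hlen hx
    rcases α with _ | ⟨i₀, α'⟩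
    · rw [hx, cs.wordProd_nil, one_mul, inv_mul_cancel_left]
      exact wordProd_mem_WP' cs hβ
    set α : List B := i₀ :: α' with hαdef
    have hαne : α.length ≠ 0 := by simp [hαdef]
    set v : ℕ → W := fun j => cs.wordProd (α.drop j) * d * cs.wordProd β with hvdef
    have hv : ∀ j, j < α.length → v j = cs.simple (α.getD j i₀) * v (j + 1) := by
      intro j hj
      show cs.wordProd (α.drop j) * d * cs.wordProd β
        = cs.simple (α.getD j i₀) * (cs.wordProd (α.drop (j+1)) * d * cs.wordProd β)
      rw [List.drop_eq_getElem_cons hj, cs.wordProd_cons, List.getD_eq_getElem α i₀ hj]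
      group
    have hv0 : v 0 = x := by
      show cs.wordProd (α.drop 0) * d * cs.wordProd β = x
      rw [List.drop_zero, ← hx]
    have hvlen : v α.length = d * cs.wordProd β := by
      show cs.wordProd (α.drop α.length) * d * cs.wordProd β = d * cs.wordProd β
      rw [List.drop_length, cs.wordProd_nil, one_mul]
    -- there is a descent step
    have key : ∃ j, ∃ _ : j < α.length,
        cs.length (cs.simple (α.getD j i₀) * v (j + 1)) < cs.length (v (j + 1)) := by
      by_contra hno
      push_neg at hno
      have hstep : ∀ j, j < α.length → cs.length (v j) = cs.length (v (j + 1)) + 1 := by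
        intro j hj
        rcases cs.length_simple_mul (v (j + 1)) (α.getD j i₀) with hcase | hcase
        · rw [hv j hj, hcase]
        · exfalso
          have := hno j hj
          omega
      have haux : ∀ j, j ≤ α.length → cs.length (v j) + j = cs.length (v 0) := by
        intro j
        induction j with
        | zero => simp
        | succ j ihj =>
          intro hj1
          have h1 := hstep j (by omega)
          have h2 := ihj (by omega)
          omega
      have h1 := haux α.length le_rfl
      have hxle : cs.length x ≤ cs.length (d * cs.wordProd β) := by
        have hmem : (cs.wordProd α)⁻¹ ∈ Subgroup.closure (cs.simple '' J') :=
          inv_mem (wordProd_mem_WP' cs hα)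
        have heq : (cs.wordProd α)⁻¹ * x = d * cs.wordProd β := by
          rw [hx]; group
        have := hxmin _ hmem
        rwa [heq] at this
      rw [hv0, hvlen] at h1
      omega
    obtain ⟨j, hj, hdesc⟩ := key
    set L1 : List B := α.drop (j + 1) with hL1def
    set γ : List B := L1 ++ (δ ++ β) with hγdef
    have hvγ : v (j + 1) = cs.wordProd γ := by
      show cs.wordProd (α.drop (j+1)) * d * cs.wordProd β = cs.wordProd γ
      rw [hγdef, cs.wordProd_append, cs.wordProd_append, hδ]
      simp only [mul_assoc]
      rfl
    have hdesc' : cs.length (cs.simple (α.getD j i₀) * cs.wordProd γ)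
        < cs.length (cs.wordProd γ) := by
      rw [← hvγ]; exact hdesc
    obtain ⟨p, hp, heq⟩ := left_exchange cs hdesc'
    have hxsplit : x = cs.wordProd (α.take j) * (cs.simple (α.getD j i₀) * v (j + 1)) := by
      rw [hx]
      conv_lhs => rw [← List.take_append_drop j α]
      rw [cs.wordProd_append, ← hv j hj]
      show cs.wordProd (α.take j) * cs.wordProd (α.drop j) * d * cs.wordProd β
        = cs.wordProd (α.take j) * (cs.wordProd (α.drop j) * d * cs.wordProd β)
      group
    have hγlen : γ.length = L1.length + (δ.length + β.length) := by
      rw [hγdef]; simp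
    by_cases hp1 : p < L1.length
    · -- deletion in the J'-prefix part: both words shrink
      have herase : γ.eraseIdx p = (L1.eraseIdx p) ++ (δ ++ β) := by
        rw [hγdef]
        exact List.eraseIdx_append_of_lt_length hp1 _
      have hxnew : x = cs.wordProd (α.take j ++ L1.eraseIdx p) * d * cs.wordProd β := by
        rw [hxsplit, hvγ, heq, herase, cs.wordProd_append, cs.wordProd_append,
          cs.wordProd_append, hδ]
        group
      apply ih (α.take j ++ L1.eraseIdx p) β
      · intro i hi
        rcases List.mem_append.mp hi with h1 | h1
        · exact hα i (List.take_subset j α h1)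
        · exact hα i (List.drop_subset (j+1) α (List.eraseIdx_subset h1))
      · exact hβ
      · have e1 : (α.take j).length = j := by
          rw [List.length_take]
          omega
        have e2 : (L1.eraseIdx p).length = L1.length - 1 := by
          rw [List.length_eraseIdx, if_pos hp1]
        have e3 : L1.length = α.length - (j + 1) := by
          rw [hL1def, List.length_drop]
        rw [List.length_append]
        omega
      · exact hxnew
    · have hple : L1.length ≤ p := by omega
      have herase1 : γ.eraseIdx p = L1 ++ ((δ ++ β).eraseIdx (p - L1.length)) := by
        rw [hγdef]
        exact List.eraseIdx_append_of_length_le hple _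
      set q : ℕ := p - L1.length with hqdef
      by_cases hp2 : q < δ.length
      · -- deletion in the reduced word of d : impossible
        exfalso
        have herase2 : (δ ++ β).eraseIdx q = δ.eraseIdx q ++ β :=
          List.eraseIdx_append_of_lt_length hp2 _
        -- heq : s i * π γ = π (γ.eraseIdx p)
        have heq2 : cs.simple (α.getD j i₀) * (cs.wordProd L1 * (d * cs.wordProd β))
            = cs.wordProd L1 * (cs.wordProd (δ.eraseIdx q) * cs.wordProd β) := by
          have lhs1 : cs.simple (α.getD j i₀) * cs.wordProd γ
              = cs.simple (α.getD j i₀) * (cs.wordProd L1 * (d * cs.wordProd β)) := by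
            rw [hγdef, cs.wordProd_append, cs.wordProd_append, hδ]
          have rhs1 : cs.wordProd (γ.eraseIdx p)
              = cs.wordProd L1 * (cs.wordProd (δ.eraseIdx q) * cs.wordProd β) := by
            rw [herase1, herase2, cs.wordProd_append, cs.wordProd_append]
          rw [← lhs1, ← rhs1]
          exact heq
        have heq3 : ((cs.wordProd L1)⁻¹ * cs.simple (α.getD j i₀) * cs.wordProd L1) * d
            = cs.wordProd (δ.eraseIdx q) := by
          have := congrArg (fun z => (cs.wordProd L1)⁻¹ * z * (cs.wordProd β)⁻¹) heq2
          calc ((cs.wordProd L1)⁻¹ * cs.simple (α.getD j i₀) * cs.wordProd L1) * d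
              = (cs.wordProd L1)⁻¹ * (cs.simple (α.getD j i₀) *
                (cs.wordProd L1 * (d * cs.wordProd β))) * (cs.wordProd β)⁻¹ := by group
            _ = (cs.wordProd L1)⁻¹ * (cs.wordProd L1 *
                (cs.wordProd (δ.eraseIdx q) * cs.wordProd β)) * (cs.wordProd β)⁻¹ := by
                rw [heq2]
            _ = cs.wordProd (δ.eraseIdx q) := by group
        have hL1J : cs.wordProd L1 ∈ Subgroup.closure (cs.simple '' J') := by
          apply wordProd_mem_WP' cs
          intro i hi
          exact hα i (List.drop_subset (j+1) α hi)
        have hi₀J : cs.simple (α.getD j i₀) ∈ Subgroup.closure (cs.simple '' J') := by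
          apply Subgroup.subset_closure
          refine ⟨α.getD j i₀, ?_, rfl⟩
          apply hα
          rw [List.getD_eq_getElem α i₀ hj]
          exact List.getElem_mem hj
        have haJ : (cs.wordProd L1)⁻¹ * cs.simple (α.getD j i₀) * cs.wordProd L1
            ∈ Subgroup.closure (cs.simple '' J') :=
          mul_mem (mul_mem (inv_mem hL1J) hi₀J) hL1J
        have hshort : cs.length (cs.wordProd (δ.eraseIdx q)) < cs.length d := by
          calc cs.length (cs.wordProd (δ.eraseIdx q)) ≤ (δ.eraseIdx q).length :=
              cs.length_wordProd_le _
            _ = δ.length - 1 := by rw [List.length_eraseIdx, if_pos hp2]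
            _ < cs.length d := by omega
        by_cases hfix : ((cs.wordProd L1)⁻¹ * cs.simple (α.getD j i₀) * cs.wordProd L1) * d = d
        · rw [hfix] at heq3
          rw [← heq3] at hshort
          omega
        · have := hdmin _ haJ hfix
          rw [heq3] at this
          omega
      · -- deletion in the K-part: β shrinks
        have hqge : δ.length ≤ q := by omega
        have herase2 : (δ ++ β).eraseIdx q = δ ++ β.eraseIdx (q - δ.length) :=
          List.eraseIdx_append_of_length_le hqge _
        have hxnew : x = cs.wordProd (α.take j ++ L1) * d
            * cs.wordProd (β.eraseIdx (q - δ.length)) := by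
          rw [hxsplit, hvγ, heq, herase1, herase2, cs.wordProd_append, cs.wordProd_append,
            cs.wordProd_append, hδ]
          group
        apply ih (α.take j ++ L1) (β.eraseIdx (q - δ.length))
        · intro i hi
          rcases List.mem_append.mp hi with h1 | h1
          · exact hα i (List.take_subset j α h1)
          · exact hα i (List.drop_subset (j+1) α h1)
        · intro i hi
          exact hβ i (List.eraseIdx_subset hi)
        · have e1 : (α.take j).length = j := by
            rw [List.length_take]
            omega
          have e3 : L1.length = α.length - (j + 1) := by
            rw [hL1def, List.length_drop]
          have e4 : q - δ.length < β.length := by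
            rw [hγlen] at hp
            omega
          have e2 : (β.eraseIdx (q - δ.length)).length = β.length - 1 := by
            rw [List.length_eraseIdx, if_pos e4]
          rw [List.length_append]
          omega
        · exact hxnew

/-- Kilmoyer-type lemma: if `x` is of minimal length in `W_{J'} x`, lies in
`W_{J'} d W_K`, and `d` is the strictly minimal element, then `x ∈ d W_K`. -/
lemma lemA {J' K : Set B} {d x a b : W}
    (hxmin : ∀ a ∈ Subgroup.closure (cs.simple '' J'), cs.length x ≤ cs.length (a * x))
    (hdmin : ∀ a ∈ Subgroup.closure (cs.simple '' J'),
      a * d ≠ d → cs.length d < cs.length (a * d))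
    (ha : a ∈ Subgroup.closure (cs.simple '' J'))
    (hb : b ∈ Subgroup.closure (cs.simple '' K))
    (hx : x = a * d * b) :
    d⁻¹ * x ∈ Subgroup.closure (cs.simple '' K) := by
  obtain ⟨α, hαJ, rfl⟩ := exists_word_of_mem_WP' cs ha
  obtain ⟨β, hβK, rfl⟩ := exists_word_of_mem_WP' cs hb
  obtain ⟨δ, hδlen, hδ⟩ := cs.exists_reduced_word d
  exact lemA_aux cs (by rw [hδ]; exact hδlen.symm) hδ hxmin hdmin (α.length + β.length) α β hαJ hβK le_rfl hx

end Aux2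



lemma pr_succ' {W : Type*} [Group W] (u : ℕ → W) (n : ℕ) :
    pr u (n + 1) = pr u n * u n := by
  unfold pr
  rw [List.range_succ, List.map_append, List.prod_append]
  simp

/-- In the inductive construction of `ψ(w)` in the proof of Proposition 2.5
(`u_0 ⋯ u_n = min(W_{J'} w W_{J_n})`, with the recursions for `J_n`, `J'_n`),
one has `u_n ∈ W_{J_{n-1}}` for all `n ≥ 1`. -/
theorem statement12 (cs : CoxeterSystem M W) (f : B ≃ B) (e : W ≃* W)
    (hef : ∀ b, e (cs.simple b) = cs.simple (f b)) (J J' : Set B)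
    (hJ' : f '' J = J') (w : W) (hw : IsMinL cs J' w)
    (Jn J'n : ℕ → Set B) (u : ℕ → W)
    (hJ0 : Jn 0 = J) (hJ'0 : J'n 0 = J')
    (hrecJ : ∀ n, f '' Jn (n + 1) = (f '' Jn n) ∩ AdSet cs (pr u (n + 1)) (Jn n))
    (hrecJ' : ∀ n, J'n (n + 1) = Jn n ∩ AdSet cs (pr u (n + 1))⁻¹ (f '' Jn n))
    (hmin : ∀ n, IsMinOf cs J' (Jn n) w (pr u (n + 1))) :
    ∀ n, u (n + 1) ∈ WP cs (Jn n) := by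
  intro n
  obtain ⟨hex_n, hmin_n⟩ := hmin n
  obtain ⟨hex_n1, hmin_n1⟩ := hmin (n + 1)
  obtain ⟨a₀, ha₀, b₀, hb₀, hd⟩ := hex_n
  obtain ⟨a₁, ha₁, b₁, hb₁, hx⟩ := hex_n1
  set d := pr u (n + 1) with hddef
  set x := pr u (n + 2) with hxdef
  have hJsub : Jn (n + 1) ⊆ Jn n := by
    have h1 : f '' Jn (n + 1) ⊆ f '' Jn n := by
      rw [hrecJ n]
      exact Set.inter_subset_left
    exact (Set.image_subset_image_iff f.injective).mp h1
  have hWPsub : WP cs (Jn (n + 1)) ≤ WP cs (Jn n) :=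
    Subgroup.closure_mono (Set.image_mono hJsub)
  have hb₁' : b₁ ∈ WP cs (Jn n) := hWPsub hb₁
  have hw2 : w = a₀⁻¹ * d * b₀⁻¹ := by rw [hd]; group
  have hxd : x = (a₁ * a₀⁻¹) * d * (b₀⁻¹ * b₁) := by rw [hx, hw2]; group
  have hxmin : ∀ a ∈ Subgroup.closure (cs.simple '' J'),
      cs.length x ≤ cs.length (a * x) := by
    intro a haJ
    by_cases hax : a * x = x
    · rw [hax]
    · have heq : (a * a₁) * w * b₁ = a * x := by rw [hx]; group
      have h2 := hmin_n1 (a * a₁) (mul_mem haJ ha₁) b₁ hb₁ (by rw [heq]; exact hax)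
      rw [heq] at h2
      exact le_of_lt h2
  have hdmin : ∀ a ∈ Subgroup.closure (cs.simple '' J'),
      a * d ≠ d → cs.length d < cs.length (a * d) := by
    intro a haJ hne
    have heq : (a * a₀) * w * b₀ = a * d := by rw [hd]; group
    have := hmin_n (a * a₀) (mul_mem haJ ha₀) b₀ hb₀ (by rw [heq]; exact hne)
    rwa [heq] at this
  have hres := lemA cs hxmin hdmin (mul_mem ha₁ (inv_mem ha₀))
    (mul_mem (inv_mem hb₀) hb₁') hxd
  have hux : d⁻¹ * x = u (n + 1) := by
    have hps : x = d * u (n + 1) := pr_succ' u (n + 1)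
    rw [hps]
    group
  rw [← hux]
  exact hres


end Lusztig
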